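/- Let (T², T) be a flow on the two-torus and S a monotone, upper semicontinuous, T-invariant equivalence relation such that the quotient flow (T²/S, T) is minimal. If some equivalence class M ∈ T²/S is inessential, then every equivalence class of S is inessential. -/

import Mathlib

open Topology

/-- The two-torus `𝕋² = ℝ²/ℤ²`. -/
abbrev Torus2 : Type := UnitAddCircle × UnitAddCircle

/-- A loop `γ` in `𝕋²` is null-homotopic if it is (freely) homotopic to a constant. -/
def LoopNullHomotopic (γ : C(UnitAddCircle, Torus2)) : Prop :=
  ∃ c : Torus2, γ.Homotopic (ContinuousMap.const _ c)

/-- An open set `U ⊆ 𝕋²` is doubly essential if it contains two loops which are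
homotopically nontrivial in `𝕋²` and not (freely) homotopic to each other in `𝕋²`. -/
def DoublyEssentialOpen (U : Set Torus2) : Prop :=
  ∃ γ₁ γ₂ : C(UnitAddCircle, Torus2), Set.range γ₁ ⊆ U ∧ Set.range γ₂ ⊆ U ∧
    ¬ LoopNullHomotopic γ₁ ∧ ¬ LoopNullHomotopic γ₂ ∧ ¬ γ₁.Homotopic γ₂

/-- A closed set `M ⊆ 𝕋²` is inessential if its complement is doubly essential. -/
def InessentialClosed (M : Set Torus2) : Prop := DoublyEssentialOpen Mᶜ

section Aux

variable {T : Type*} [TopologicalSpace T] [Group T] [IsTopologicalGroup T]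
  [MulAction T Torus2] [ContinuousSMul T Torus2]

/-- The action of `t : T` as a continuous self-map of the torus. -/
noncomputable def smulCM (t : T) : C(Torus2, Torus2) := ⟨(t • ·), continuous_const_smul t⟩

lemma smulCM_comp_cancel (t : T) (γ : C(UnitAddCircle, Torus2)) :
    (smulCM (t⁻¹ : T)).comp ((smulCM t).comp γ) = γ := by
  ext s <;> simp [smulCM]

lemma smulCM_comp_const (t : T) (c : Torus2) :
    (smulCM t).comp (ContinuousMap.const UnitAddCircle c)
      = ContinuousMap.const UnitAddCircle (t • c) := by
  ext s <;> simp [smulCM]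

lemma push_not_null (t : T) (γ : C(UnitAddCircle, Torus2))
    (h : ¬ LoopNullHomotopic γ) : ¬ LoopNullHomotopic ((smulCM t).comp γ) := by
  rintro ⟨c, hc⟩
  refine h ⟨(t⁻¹ : T) • c, ?_⟩
  have h2 := (ContinuousMap.Homotopic.refl (smulCM (t⁻¹ : T))).comp hc
  rwa [smulCM_comp_cancel, smulCM_comp_const] at h2

lemma push_not_homotopic (t : T) (γ₁ γ₂ : C(UnitAddCircle, Torus2))
    (h : ¬ γ₁.Homotopic γ₂) :
    ¬ ((smulCM t).comp γ₁).Homotopic ((smulCM t).comp γ₂) := by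
  intro hc
  have h2 := (ContinuousMap.Homotopic.refl (smulCM (t⁻¹ : T))).comp hc
  rw [smulCM_comp_cancel, smulCM_comp_cancel] at h2
  exact h h2

end Aux

/-- Let `(𝕋², T)` be a flow on the two-torus (a topological group `T`
acting continuously) and `S` a monotone, upper semicontinuous, `T`-invariant
equivalence relation such that the quotient flow `(𝕋²/S, T)` is minimal (every orbit
is dense). If some equivalence class is inessential, then every equivalence class of
`S` is inessential. -/
theorem stmt16 {T : Type*} [TopologicalSpace T] [Group T] [IsTopologicalGroup T]
    [MulAction T Torus2] [ContinuousSMul T Torus2]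
    (S : Setoid Torus2)
    (hmono : ∀ x : Torus2, IsConnected {y | S.r x y})
    (husc : (∀ x : Torus2, IsCompact {y | S.r x y}) ∧ IsClosedMap (Quotient.mk S))
    (hinv : ∀ (t : T) (x : Torus2), (t • ·) '' {y | S.r x y} = {y | S.r (t • x) y})
    -- the quotient flow is minimal: the orbit of every point `⟦x⟧` of `𝕋²/S` is dense
    (hmin : ∀ x : Torus2, Dense (Set.range fun t : T => Quotient.mk S (t • x)))
    (x₀ : Torus2) (hx₀ : InessentialClosed {y | S.r x₀ y}) :
    ∀ x : Torus2, InessentialClosed {y | S.r x y} := by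
  obtain ⟨γ₁, γ₂, hg1, hg2, hn1, hn2, hne⟩ := hx₀
  intro x
  set q : Torus2 → Quotient S := Quotient.mk S with hq
  -- the union of the ranges of the two loops is closed
  have hKcl : IsClosed (Set.range γ₁ ∪ Set.range γ₂) :=
    ((isCompact_range γ₁.continuous).union (isCompact_range γ₂.continuous)).isClosed
  -- the saturation of the union is closed, its complement in the quotient is open
  have hCcl : IsClosed (q '' (Set.range γ₁ ∪ Set.range γ₂)) := husc.2 _ hKcl
  have hopen : IsOpen (q '' (Set.range γ₁ ∪ Set.range γ₂))ᶜ := hCcl.isOpen_compl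
  -- this open set is nonempty: it contains the class of x₀
  have hmem : q x₀ ∈ (q '' (Set.range γ₁ ∪ Set.range γ₂))ᶜ := by
    rintro ⟨z, hz, hzq⟩
    have hr : S.r x₀ z := S.symm (Quotient.exact hzq)
    rcases hz with hz | hz
    · exact hg1 hz hr
    · exact hg2 hz hr
  -- by minimality, some point of the orbit of ⟦x⟧ lies in this open set
  obtain ⟨y, ⟨t, rfl⟩, hy⟩ :=
    (hmin x).exists_mem_open hopen ⟨q x₀, hmem⟩
  -- hence both loops avoid the class of t • x
  have havoid : ∀ z ∈ Set.range γ₁ ∪ Set.range γ₂, ¬ S.r (t • x) z := by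
    intro z hz hr
    exact hy ⟨z, hz, (Quotient.sound hr).symm⟩
  -- push the loops by t⁻¹ to get loops avoiding the class of x
  refine ⟨(smulCM (t⁻¹ : T)).comp γ₁, (smulCM (t⁻¹ : T)).comp γ₂, ?_, ?_, ?_, ?_, ?_⟩
  · rintro w ⟨s, rfl⟩ hw
    have : (t : T) • ((t⁻¹ : T) • γ₁ s) ∈ {y | S.r (t • x) y} := by
      rw [← hinv t x]; exact ⟨_, hw, rfl⟩
    rw [smul_inv_smul] at this
    exact havoid _ (Or.inl ⟨s, rfl⟩) this
  · rintro w ⟨s, rfl⟩ hw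
    have : (t : T) • ((t⁻¹ : T) • γ₂ s) ∈ {y | S.r (t • x) y} := by
      rw [← hinv t x]; exact ⟨_, hw, rfl⟩
    rw [smul_inv_smul] at this
    exact havoid _ (Or.inr ⟨s, rfl⟩) this
  · exact push_not_null _ _ hn1
  · exact push_not_null _ _ hn2
  · exact push_not_homotopic _ _ _ hne
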